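/- Let 𝒜 be an abelian category and let 𝒞 be an IE-closed subcategory of 𝒜 (closed under images and extensions). Then 𝒞 = Filt(Fac 𝒞) ∩ Filt(Sub 𝒞); equivalently, 𝒞 equals the intersection of the smallest torsion class containing 𝒞 and the smallest torsion-free class containing 𝒞. -/

import Mathlib

universe v u

open CategoryTheory CategoryTheory.Limits

section Defs

variable (A : Type u) [Category.{v} A] [Abelian A]

/-- A class of objects is closed under isomorphisms. -/
def IsoClosed (C : Set A) : Prop := ∀ X Y : A, (X ≅ Y) → X ∈ C → Y ∈ C

/-- A class of objects contains the zero object(s). -/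
def ContainsZero (C : Set A) : Prop := ∀ X : A, IsZero X → X ∈ C

/-- A class of objects is closed under quotients: for every epimorphism `C ↠ X`
with `C` in the class, `X` is in the class. -/
def QuotientsClosed (C : Set A) : Prop :=
  ∀ (X Y : A) (f : X ⟶ Y), Epi f → X ∈ C → Y ∈ C

/-- A class of objects is closed under subobjects: for every monomorphism `X ↪ C`
with `C` in the class, `X` is in the class. -/
def SubobjectsClosed (C : Set A) : Prop :=
  ∀ (X Y : A) (f : X ⟶ Y), Mono f → Y ∈ C → X ∈ C

/-- A class of objects is closed under images: for every morphism `f : C₁ ⟶ C₂` with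
`C₁, C₂` in the class, the image of `f` is in the class. -/
def ImagesClosed (C : Set A) : Prop :=
  ∀ (X Y : A) (f : X ⟶ Y), X ∈ C → Y ∈ C → image f ∈ C

/-- A class of objects is closed under extensions: for every short exact sequence
`0 → L → M → N → 0` with `L, N` in the class, `M` is in the class. -/
def ExtClosed (C : Set A) : Prop :=
  ∀ S : ShortComplex A, S.ShortExact → S.X₁ ∈ C → S.X₃ ∈ C → S.X₂ ∈ C

/-- A torsion class: a subcategory closed under quotients and extensions. -/
def IsTorsionClass (C : Set A) : Prop :=
  IsoClosed A C ∧ ContainsZero A C ∧ QuotientsClosed A C ∧ ExtClosed A C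

/-- A torsion-free class: a subcategory closed under subobjects and extensions. -/
def IsTorsionFreeClass (C : Set A) : Prop :=
  IsoClosed A C ∧ ContainsZero A C ∧ SubobjectsClosed A C ∧ ExtClosed A C

/-- `Fac C`: the class of objects admitting an epimorphism from an object of `C`. -/
def Fac (C : Set A) : Set A := {X | ∃ (C₀ : A) (f : C₀ ⟶ X), C₀ ∈ C ∧ Epi f}

/-- `Sub C`: the class of objects admitting a monomorphism into an object of `C`. -/
def Subs (C : Set A) : Set A := {X | ∃ (C₀ : A) (f : X ⟶ C₀), C₀ ∈ C ∧ Mono f}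

/-- `Filt D`: the class of objects admitting a finite filtration
`0 = X₀ ≤ X₁ ≤ ⋯ ≤ Xₙ = X` whose subquotients `Xᵢ/Xᵢ₋₁` all belong to `D`.
Equivalently (inductively): `X` is zero, or `X` is an extension of an object of `D`
by an object of `Filt D`. -/
inductive Filt (D : Set A) : A → Prop
  | zero (X : A) : IsZero X → Filt D X
  | ext (S : ShortComplex A) : S.ShortExact → Filt D S.X₁ → S.X₃ ∈ D → Filt D S.X₂

end Defs

/-!
STATEMENT 3: Let `𝒜` be an abelian category and `𝒞` an IE-closed subcategory of `𝒜`
(closed under images and extensions). Then `𝒞 = Filt (Fac 𝒞) ∩ Filt (Sub 𝒞)`, i.e. `𝒞`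
is the intersection of the smallest torsion class containing it and the smallest
torsion-free class containing it.
-/

section Aux

open CategoryTheory.Abelian ZeroObject
open scoped Pseudoelement

variable {A : Type u} [Category.{v} A] [Abelian A]

lemma mem_of_epi_mono (C : Set A) (hiso : IsoClosed A C) (him : ImagesClosed A C)
    {E X Z : A} (e : E ⟶ X) (m : X ⟶ Z) [Epi e] [Mono m] (hE : E ∈ C) (hZ : Z ∈ C) :
    X ∈ C := by
  haveI := strongEpi_of_epi e
  exact hiso _ _ (image.isoStrongEpiMono e m rfl).symm (him _ _ (e ≫ m) hE hZ)

/-- `CoFilt D`: cofiltration version of `Filt`. -/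
inductive CoFilt (A : Type u) [Category.{v} A] [Abelian A] (D : Set A) : A → Prop
  | zero (X : A) : IsZero X → CoFilt A D X
  | ext (S : ShortComplex A) : S.ShortExact → S.X₁ ∈ D → CoFilt A D S.X₃ → CoFilt A D S.X₂

lemma cofilt_of_iso {D : Set A} {X Y : A} (e : X ≅ Y) (hX : CoFilt A D X) : CoFilt A D Y := by
  cases hX with
  | zero X h => exact CoFilt.zero Y (h.of_iso e.symm)
  | ext S hS h1 h3 =>
      refine CoFilt.ext (ShortComplex.mk (S.f ≫ e.hom) (e.inv ≫ S.g)
        (by rw [Category.assoc, Iso.hom_inv_id_assoc, S.zero])) ?_ h1 h3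
      exact ShortComplex.shortExact_of_iso (S₁ := S)
        (ShortComplex.isoMk (Iso.refl S.X₁) e (Iso.refl S.X₃) (by simp) (by simp)) hS

lemma mem_filt (D : Set A) {X : A} (hX : X ∈ D) : Filt A D X := by
  refine Filt.ext (ShortComplex.mk (0 : (0 : A) ⟶ X) (𝟙 X) (by simp)) ?_
    (Filt.zero _ (isZero_zero A)) hX
  haveI : Mono (0 : (0 : A) ⟶ X) :=
    ⟨fun g h _ => (isZero_zero A).eq_of_tgt g h⟩
  exact ShortComplex.ShortExact.mk'
    ((ShortComplex.exact_iff_mono _ rfl).2 inferInstance) inferInstance inferInstance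

lemma mem_cofilt (D : Set A) {X : A} (hX : X ∈ D) : CoFilt A D X := by
  refine CoFilt.ext (ShortComplex.mk (𝟙 X) (0 : X ⟶ (0 : A)) (by simp)) ?_
    hX (CoFilt.zero _ (isZero_zero A))
  haveI : Epi (0 : X ⟶ (0 : A)) :=
    ⟨fun g h _ => (isZero_zero A).eq_of_src g h⟩
  exact ShortComplex.ShortExact.mk'
    ((ShortComplex.exact_iff_epi _ rfl).2 inferInstance) inferInstance inferInstance

lemma shortExact_cokernel {X Y : A} (m : X ⟶ Y) [Mono m] :
    (ShortComplex.mk m (cokernel.π m) (cokernel.condition m)).ShortExact :=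
  ShortComplex.ShortExact.mk'
    (ShortComplex.exact_of_g_is_cokernel _ (cokernelIsCokernel m)) inferInstance inferInstance

lemma shortExact_ker_factorThruImage {Y N : A} (h : Y ⟶ N) :
    (ShortComplex.mk (kernel.ι h) (Abelian.factorThruImage h)
      (by rw [← cancel_mono (Abelian.image.ι h), Category.assoc, Abelian.image.fac,
        kernel.condition, zero_comp])).ShortExact := by
  refine ShortComplex.ShortExact.mk' (ShortComplex.exact_of_f_is_kernel _ ?_)
    inferInstance inferInstance
  exact KernelFork.IsLimit.ofι' _ _
    (fun {W'} g' hg' => ⟨kernel.lift h g'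
      (by rw [← Abelian.image.fac h, ← Category.assoc, hg', zero_comp]), by simp⟩)

lemma shortExact_pullback (S : ShortComplex A) (hS : S.ShortExact) {C' : A}
    (p : C' ⟶ S.X₃) [Epi p] :
    (ShortComplex.mk (pullback.lift (f := S.g) (g := p) S.f 0 (by rw [S.zero, zero_comp]))
      (pullback.snd S.g p) (pullback.lift_snd _ _ _)).ShortExact := by
  haveI := hS.mono_f; haveI := hS.epi_g
  have hlf : pullback.lift S.f 0 (by rw [S.zero, zero_comp]) ≫ pullback.fst S.g p = S.f :=
    pullback.lift_fst _ _ _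
  have hls : pullback.lift S.f 0 (by rw [S.zero, zero_comp]) ≫ pullback.snd S.g p =
      (0 : S.X₁ ⟶ C') := pullback.lift_snd _ _ _
  haveI : Mono (pullback.lift (f := S.g) (g := p) S.f (0 : S.X₁ ⟶ C') (by rw [S.zero, zero_comp])) :=
    mono_of_mono_fac hlf
  refine ShortComplex.ShortExact.mk' (ShortComplex.exact_of_f_is_kernel _ ?_)
    inferInstance inferInstance
  refine KernelFork.IsLimit.ofι' _ _ (fun {W'} t ht => ?_)
  obtain ⟨w, hw⟩ := KernelFork.IsLimit.lift' hS.fIsKernel (t ≫ pullback.fst S.g p)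
    (by rw [Category.assoc, pullback.condition, ← Category.assoc, ht, zero_comp])
  have hw' : w ≫ S.f = t ≫ pullback.fst S.g p := hw
  have ht' : t ≫ pullback.snd S.g p = 0 := ht
  refine ⟨w, pullback.hom_ext ?_ ?_⟩
  · dsimp only
    rw [Category.assoc, hlf, hw']
  · dsimp only
    rw [Category.assoc, hls, comp_zero, ht']

lemma shortExact_pushout (S : ShortComplex A) (hS : S.ShortExact) {C' : A}
    (n : S.X₁ ⟶ C') [Mono n] :
    (ShortComplex.mk (pushout.inr S.f n) (pushout.desc (f := S.f) (g := n) S.g 0 (by rw [S.zero, comp_zero]))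
      (pushout.inr_desc _ _ _)).ShortExact := by
  haveI := hS.mono_f; haveI := hS.epi_g
  have hvl : pushout.inl S.f n ≫ pushout.desc S.g 0 (by rw [S.zero, comp_zero]) = S.g :=
    pushout.inl_desc _ _ _
  have hvr : pushout.inr S.f n ≫ pushout.desc S.g 0 (by rw [S.zero, comp_zero]) =
      (0 : C' ⟶ S.X₃) := pushout.inr_desc _ _ _
  haveI : Epi (pushout.desc (f := S.f) (g := n) S.g (0 : C' ⟶ S.X₃) (by rw [S.zero, comp_zero])) :=
    epi_of_epi_fac hvl
  refine ShortComplex.ShortExact.mk' (ShortComplex.exact_of_g_is_cokernel _ ?_)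
    inferInstance inferInstance
  refine CokernelCofork.IsColimit.ofπ' _ _ (fun {W'} t ht => ?_)
  obtain ⟨w, hw⟩ := CokernelCofork.IsColimit.desc' hS.gIsCokernel (pushout.inl S.f n ≫ t)
    (by rw [← Category.assoc, pushout.condition, Category.assoc, ht, comp_zero])
  have hw' : S.g ≫ w = pushout.inl S.f n ≫ t := hw
  have ht' : pushout.inr S.f n ≫ t = 0 := ht
  refine ⟨w, pushout.hom_ext ?_ ?_⟩
  · dsimp only
    rw [← Category.assoc, hvl, hw']
  · dsimp only
    rw [← Category.assoc, hvr, zero_comp, ht']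

end Aux

section Aux2

open CategoryTheory.Abelian ZeroObject
open scoped Pseudoelement

variable {A : Type u} [Category.{v} A] [Abelian A]

lemma third_iso {D₁ L X N L₃ : A} (d : D₁ ⟶ L) (q : L ⟶ L₃) (f : L ⟶ X) (g : X ⟶ N)
    {w1 : d ≫ q = 0} {w2 : f ≫ g = 0}
    (h1 : (ShortComplex.mk d q w1).ShortExact) (h2 : (ShortComplex.mk f g w2).ShortExact) :
    ∃ (Y : A) (π : X ⟶ Y) (u : L₃ ⟶ Y) (v : Y ⟶ N) (w3 : (d ≫ f) ≫ π = 0) (w4 : u ≫ v = 0),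
      (ShortComplex.mk (d ≫ f) π w3).ShortExact ∧ (ShortComplex.mk u v w4).ShortExact := by
  haveI : Mono d := h1.mono_f
  haveI : Epi q := h1.epi_g
  haveI : Mono f := h2.mono_f
  haveI : Epi g := h2.epi_g
  haveI : Mono (d ≫ f) := mono_comp d f
  set π : X ⟶ cokernel (d ≫ f) := cokernel.π (d ≫ f) with hπ
  have SES1 : (ShortComplex.mk (d ≫ f) π (cokernel.condition _)).ShortExact :=
    shortExact_cokernel (d ≫ f)
  obtain ⟨u, hu⟩ := CokernelCofork.IsColimit.desc' h1.gIsCokernel (f ≫ π)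
    (by rw [← Category.assoc, cokernel.condition])
  have hu' : q ≫ u = f ≫ π := hu
  set v : cokernel (d ≫ f) ⟶ N := cokernel.desc (d ≫ f) g
    (by rw [Category.assoc, w2, comp_zero]) with hvdef
  have hv : π ≫ v = g := cokernel.π_desc _ _ _
  have w4 : u ≫ v = 0 := by
    rw [← cancel_epi q, comp_zero, ← Category.assoc, hu', Category.assoc, hv, w2]
  haveI : Epi v := epi_of_epi_fac hv
  haveI : Mono u := by
    apply Pseudoelement.mono_of_zero_of_map_zero
    intro y hy
    obtain ⟨ll, rfl⟩ := Pseudoelement.pseudo_surjective_of_epi q y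
    have h0 : π (f ll) = 0 := by
      rw [← Pseudoelement.comp_apply, ← hu', Pseudoelement.comp_apply, hy]
    obtain ⟨a, ha⟩ := Pseudoelement.pseudo_exact_of_exact SES1.exact _ h0
    have hfa : f (d a) = f ll := by rw [← Pseudoelement.comp_apply]; exact ha
    have hda := Pseudoelement.pseudo_injective_of_mono f hfa
    rw [← hda, ← Pseudoelement.comp_apply, w1, Pseudoelement.zero_apply]
  have hex : (ShortComplex.mk u v w4).Exact := by
    apply Pseudoelement.exact_of_pseudo_exact
    intro b hb
    obtain ⟨x, rfl⟩ := Pseudoelement.pseudo_surjective_of_epi π b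
    have hgx : g x = 0 := by
      rw [← hv, Pseudoelement.comp_apply]; exact hb
    obtain ⟨ll, hll⟩ := Pseudoelement.pseudo_exact_of_exact h2.exact x hgx
    exact ⟨q ll, by rw [← Pseudoelement.comp_apply, hu', Pseudoelement.comp_apply, hll]⟩
  exact ⟨_, π, u, v, cokernel.condition _, w4, SES1,
    ShortComplex.ShortExact.mk' hex inferInstance inferInstance⟩

lemma cofilt_ext_left {D : Set A} : ∀ {L : A}, CoFilt A D L → ∀ {X N : A} (f : L ⟶ X) (g : X ⟶ N)
    (w : f ≫ g = 0), (ShortComplex.mk f g w).ShortExact → N ∈ D → CoFilt A D X := by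
  intro L hL
  induction hL with
  | zero Z hZ =>
      intro X N f g w hS hN
      have hf : (ShortComplex.mk f g w).f = 0 := hZ.eq_of_src _ _
      haveI : Epi g := hS.epi_g
      haveI : Mono g := (ShortComplex.exact_iff_mono _ hf).1 hS.exact
      haveI : IsIso g := isIso_of_mono_of_epi g
      exact cofilt_of_iso (asIso g).symm (mem_cofilt D hN)
  | ext S hS h1 h3 ih =>
      intro X N f g w hS2 hN
      obtain ⟨Y, π, u, v, w3, w4, hA, hB⟩ := third_iso S.f S.g f g hS hS2
      exact CoFilt.ext (ShortComplex.mk (S.f ≫ f) π w3) hA h1 (ih u v w4 hB hN)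

lemma filt_to_cofilt {D : Set A} {X : A} (h : Filt A D X) : CoFilt A D X := by
  induction h with
  | zero Z hZ => exact CoFilt.zero Z hZ
  | ext S hS h1 h3 ih => exact cofilt_ext_left ih S.f S.g S.zero hS h3

set_option linter.unusedSectionVars false in
lemma subs_subobjectsClosed (C : Set A) : SubobjectsClosed A (Subs A C) := by
  intro X Y f hf hY
  obtain ⟨C₀, m, hC₀, hm⟩ := hY
  haveI := hf; haveI := hm
  exact ⟨C₀, f ≫ m, hC₀, mono_comp f m⟩

lemma filt_subobjectsClosed {D : Set A} (hD : SubobjectsClosed A D) :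
    ∀ {X : A}, Filt A D X → ∀ {Y : A} (m : Y ⟶ X), Mono m → Filt A D Y := by
  intro X hX
  induction hX with
  | zero Z hZ =>
      intro Y m hm
      haveI := hm
      exact Filt.zero Y (IsZero.of_mono m hZ)
  | ext S hS h1 h3 ih =>
      intro Y m hm
      haveI := hm
      haveI : Mono S.f := hS.mono_f
      obtain ⟨t, ht⟩ := KernelFork.IsLimit.lift' hS.fIsKernel (kernel.ι (m ≫ S.g) ≫ m)
        (by rw [Category.assoc, kernel.condition])
      have ht' : t ≫ S.f = kernel.ι (m ≫ S.g) ≫ m := ht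
      haveI : Mono (t ≫ S.f) := by rw [ht']; exact mono_comp _ _
      haveI : Mono t := mono_of_mono t S.f
      exact Filt.ext _ (shortExact_ker_factorThruImage (m ≫ S.g)) (ih t inferInstance)
        (hD _ _ (Abelian.image.ι (m ≫ S.g)) inferInstance h3)

lemma mem_of_filt_fac_subs (C : Set A) (hiso : IsoClosed A C) (hzero : ContainsZero A C)
    (him : ImagesClosed A C) (hext : ExtClosed A C) :
    ∀ {X : A}, Filt A (Fac A C) X → X ∈ Subs A C → X ∈ C := by
  intro X hX
  induction hX with
  | zero Z hZ => exact fun _ => hzero Z hZ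
  | ext S hS h1 h3 ih =>
      rintro ⟨C₀, i, hC₀, hi⟩
      haveI := hi; haveI : Mono S.f := hS.mono_f; haveI : Epi S.g := hS.epi_g
      obtain ⟨C₁, p, hC₁, hp⟩ := h3
      haveI := hp
      have hL : S.X₁ ∈ C := ih ⟨C₀, S.f ≫ i, hC₀, mono_comp _ _⟩
      have hP : (pullback S.g p : A) ∈ C := hext _ (shortExact_pullback S hS p) hL hC₁
      exact mem_of_epi_mono C hiso him (pullback.fst S.g p) i hP hC₀

lemma mem_of_cofilt_subs_fac (C : Set A) (hiso : IsoClosed A C) (hzero : ContainsZero A C)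
    (him : ImagesClosed A C) (hext : ExtClosed A C) :
    ∀ {X : A}, CoFilt A (Subs A C) X → X ∈ Fac A C → X ∈ C := by
  intro X hX
  induction hX with
  | zero Z hZ => exact fun _ => hzero Z hZ
  | ext S hS h1 h3 ih =>
      rintro ⟨C₀, p, hC₀, hp⟩
      haveI := hp; haveI : Mono S.f := hS.mono_f; haveI : Epi S.g := hS.epi_g
      have hN : S.X₃ ∈ C := ih ⟨C₀, p ≫ S.g, hC₀, epi_comp _ _⟩
      obtain ⟨Cn, n, hCn, hn⟩ := h1
      haveI := hn
      have hE : (pushout S.f n : A) ∈ C := hext _ (shortExact_pushout S hS n) hCn hN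
      exact mem_of_epi_mono C hiso him p (pushout.inl S.f n) hC₀ hE

lemma mem_of_filt_fac_filt_subs (C : Set A) (hiso : IsoClosed A C) (hzero : ContainsZero A C)
    (him : ImagesClosed A C) (hext : ExtClosed A C) :
    ∀ {X : A}, Filt A (Fac A C) X → Filt A (Subs A C) X → X ∈ C := by
  intro X hT
  induction hT with
  | zero Z hZ => exact fun _ => hzero Z hZ
  | ext S hS h1 h3 ih =>
      intro hF
      haveI : Mono S.f := hS.mono_f; haveI : Epi S.g := hS.epi_g
      have hFL : Filt A (Subs A C) S.X₁ :=
        filt_subobjectsClosed (subs_subobjectsClosed C) hF S.f inferInstance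
      have hL : S.X₁ ∈ C := ih hFL
      obtain ⟨C₁, p, hC₁, hp⟩ := h3
      haveI := hp
      have hP : (pullback S.g p : A) ∈ C := hext _ (shortExact_pullback S hS p) hL hC₁
      exact mem_of_cofilt_subs_fac C hiso hzero him hext (filt_to_cofilt hF)
        ⟨pullback S.g p, pullback.fst S.g p, hP, inferInstance⟩

end Aux2

theorem ie_closed_eq_inter_of_closures
    (A : Type u) [Category.{v} A] [Abelian A]
    (C : Set A) (hiso : IsoClosed A C) (hzero : ContainsZero A C)
    (him : ImagesClosed A C) (hext : ExtClosed A C) :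
    C = {X | Filt A (Fac A C) X} ∩ {X | Filt A (Subs A C) X} := by
  ext X
  simp only [Set.mem_inter_iff, Set.mem_setOf_eq]
  constructor
  · intro hX
    exact ⟨mem_filt _ ⟨X, 𝟙 X, hX, inferInstance⟩, mem_filt _ ⟨X, 𝟙 X, hX, inferInstance⟩⟩
  · rintro ⟨hT, hF⟩
    exact mem_of_filt_fac_filt_subs C hiso hzero him hext hT hF
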